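/- For all integers m, the sequence defined by x_{m-1} x_{m+1} = x_m^2 + 1 with initial rational function values x_1, x_2 (indeterminates) satisfies: every x_m is a Laurent polynomial in x_1 and x_2 with integer coefficients. -/

import Mathlib

noncomputable abbrev K : Type := FractionRing (MvPolynomial (Fin 2) ℚ)

noncomputable def X1 : K := algebraMap (MvPolynomial (Fin 2) ℚ) K (MvPolynomial.X 0)

noncomputable def X2 : K := algebraMap (MvPolynomial (Fin 2) ℚ) K (MvPolynomial.X 1)

theorem cluster_laurent (x : ℤ → K) (hx1 : x 1 = X1) (hx2 : x 2 = X2)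
    (hxnz : ∀ m : ℤ, x m ≠ 0)
    (hrec : ∀ m : ℤ, x (m - 1) * x (m + 1) = x m ^ 2 + 1) :
    ∀ m : ℤ, ∃ (p : MvPolynomial (Fin 2) ℤ) (a b : ℕ),
      X1 ^ a * X2 ^ b * x m =
        algebraMap (MvPolynomial (Fin 2) ℚ) K (p.map (Int.castRingHom ℚ)) := by
  classical
  set φ := algebraMap (MvPolynomial (Fin 2) ℚ) K with hφ
  set ψ : MvPolynomial (Fin 2) ℤ →+* K :=
    φ.comp (MvPolynomial.map (Int.castRingHom ℚ)) with hψdef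
  have hψ : ∀ p : MvPolynomial (Fin 2) ℤ,
      φ (p.map (Int.castRingHom ℚ)) = ψ p := fun p => rfl
  have hX1 : ψ (MvPolynomial.X 0) = X1 := by
    simp [hψdef, hφ, X1, MvPolynomial.map_X]
  have hX2 : ψ (MvPolynomial.X 1) = X2 := by
    simp [hψdef, hφ, X2, MvPolynomial.map_X]
  -- the linear-recurrence constant
  set c : K := (x 2)⁻¹ * (x 3 + x 1) with hc
  -- the invariant identity
  have inv : ∀ m : ℤ, x (m+1) * (x (m+1) + x (m-1)) = x m * (x (m+2) + x m) := by
    intro m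
    have h1 := hrec m
    have h2 := hrec (m+1)
    rw [show m+1-1 = m from by ring, show m+1+1 = m+2 from by ring] at h2
    linear_combination h1 - h2
  -- key : x m * c = x (m+1) + x (m-1) for all m
  have key2 : x 2 * c = x 3 + x 1 := by
    rw [hc, ← mul_assoc, mul_inv_cancel₀ (hxnz 2), one_mul]
  have stepUpQ : ∀ m : ℤ, x m * c = x (m+1) + x (m-1) →
      x (m+1) * c = x (m+2) + x m := by
    intro m h
    have hi := inv m
    rw [← h] at hi
    have h2 : x m * (x (m+1) * c) = x m * (x (m+2) + x m) := by
      linear_combination hi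
    exact mul_left_cancel₀ (hxnz m) h2
  have stepDnQ : ∀ m : ℤ, x (m+1) * c = x (m+2) + x m →
      x m * c = x (m+1) + x (m-1) := by
    intro m h
    have hi := inv m
    rw [← h] at hi
    have h2 : x (m+1) * (x (m+1) + x (m-1)) = x (m+1) * (x m * c) := by
      linear_combination hi
    exact (mul_left_cancel₀ (hxnz (m+1)) h2).symm
  have key : ∀ m : ℤ, x m * c = x (m+1) + x (m-1) := by
    have main : ∀ m : ℤ, x (m+2) * c = x (m+3) + x (m+1) := by
      intro m
      induction m using Int.induction_on with
      | zero => simpa using key2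
      | succ i ih =>
          have := stepUpQ (i+2) (by
            rw [show (i:ℤ)+2+1 = i+3 from by ring, show (i:ℤ)+2-1 = i+1 from by ring]
            exact ih)
          rw [show (i:ℤ)+2+1 = i+3 from by ring, show (i:ℤ)+2+2 = i+4 from by ring] at this
          rw [show ((i:ℤ)+1)+2 = i+3 from by ring, show ((i:ℤ)+1)+3 = i+4 from by ring,
            show ((i:ℤ)+1)+1 = i+2 from by ring]
          exact this
      | pred i ih =>
          have := stepDnQ (-(i:ℤ)+1) (by
            rw [show (-(i:ℤ)+1)+1 = -(i:ℤ)+2 from by ring,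
              show (-(i:ℤ)+1)+2 = -(i:ℤ)+3 from by ring]
            exact ih)
          rw [show (-(i:ℤ)+1)+1 = -(i:ℤ)+2 from by ring,
            show (-(i:ℤ)+1)-1 = -(i:ℤ) from by ring] at this
          rw [show (-(i:ℤ)-1)+2 = -(i:ℤ)+1 from by ring,
            show (-(i:ℤ)-1)+3 = -(i:ℤ)+2 from by ring,
            show (-(i:ℤ)-1)+1 = -(i:ℤ) from by ring]
          exact this
    intro m
    have := main (m-2)
    rw [show m-2+2 = m from by ring, show m-2+3 = m+1 from by ring,
      show m-2+1 = m-1 from by ring] at this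
    exact this
  -- c is Laurent
  have hcK : X1 * X2 * c = X1^2 + X2^2 + 1 := by
    have h2 := hrec 2
    norm_num at h2
    have hk := key 2
    norm_num at hk
    rw [← hx1, ← hx2]
    linear_combination x 1 * hk + h2
  -- the Laurent predicate
  set P : ℤ → Prop := fun m => ∃ (p : MvPolynomial (Fin 2) ℤ) (a b : ℕ),
      X1 ^ a * X2 ^ b * x m = ψ p with hP
  -- combination lemma
  have combine : ∀ (u v : K), (∃ p a b, X1^a * X2^b * u = ψ p) →
      (∃ q cc d, X1^cc * X2^d * v = ψ q) →
      (∃ r a' b', X1^a' * X2^b' * (c * v - u) = ψ r) := by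
    rintro u v ⟨p, a, b, hp⟩ ⟨q, cc, d, hq⟩
    refine ⟨MvPolynomial.X 0 ^ a * MvPolynomial.X 1 ^ b *
        (MvPolynomial.X 0 ^ 2 + MvPolynomial.X 1 ^ 2 + 1) * q -
        MvPolynomial.X 0 ^ (cc+1) * MvPolynomial.X 1 ^ (d+1) * p,
      a + cc + 1, b + d + 1, ?_⟩
    simp only [map_sub, map_mul, map_pow, map_add, map_one, hX1, hX2]
    linear_combination (X1^a * X2^b * (X1^2 + X2^2 + 1)) * hq -
      (X1^(cc+1) * X2^(d+1)) * hp + (X1^(a+cc) * X2^(b+d) * v) * hcK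
  have base1 : P 1 := ⟨MvPolynomial.X 0, 0, 0, by
    simp [hx1, hX1]⟩
  have base2 : P 2 := ⟨MvPolynomial.X 1, 0, 0, by
    simp [hx2, hX2]⟩
  have stepUp : ∀ m : ℤ, P m → P (m+1) → P (m+2) := by
    intro m hm hm1
    have hrel : x (m+2) = c * x (m+1) - x m := by
      have := key (m+1)
      rw [show m+1+1 = m+2 from by ring, show m+1-1 = m from by ring] at this
      linear_combination -this
    rw [hP]
    simp only [hrel]
    exact combine (x m) (x (m+1)) hm hm1
  have stepDn : ∀ m : ℤ, P m → P (m+1) → P (m-1) := by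
    intro m hm hm1
    have hrel : x (m-1) = c * x m - x (m+1) := by
      have := key m
      linear_combination -this
    rw [hP]
    simp only [hrel]
    exact combine (x (m+1)) (x m) hm1 hm
  have pair : ∀ m : ℤ, P m ∧ P (m+1) := by
    intro m
    induction m using Int.induction_on with
    | zero =>
        refine ⟨?_, by simpa using base1⟩
        have := stepDn 1 base1 (by rw [show (1:ℤ)+1 = 2 from by norm_num]; exact base2)
        simpa using this
    | succ i ih =>
        refine ⟨by exact_mod_cast ih.2, ?_⟩
        have := stepUp i ih.1 ih.2
        rw [show ((i:ℤ)+1)+1 = i+2 from by ring]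
        exact_mod_cast this
    | pred i ih =>
        refine ⟨?_, by rw [show (-(i:ℤ)-1)+1 = -(i:ℤ) from by ring]; exact ih.1⟩
        have := stepDn (-(i:ℤ)) ih.1 ih.2
        exact this
  intro m
  obtain ⟨p, a, b, h⟩ := (pair m).1
  exact ⟨p, a, b, by rw [hψ]; exact h⟩
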